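/- For θ₁, θ₂ ∈ F_{q^3}^*, the sets S_{θ₁} = {(xθ₁, x^q) : x ∈ F_{q^3}^*} and S_{θ₂} = {(xθ₂, x^q) : x ∈ F_{q^3}^*} (viewed as sets of projective points of PG(1,q^3), i.e., pairs up to F_{q^3}^*-scalar) are equal if and only if N(θ₁) = N(θ₂), where N(θ) = θ^{q^2+q+1}. -/

import Mathlib

lemma sls_sub (q : ℕ) (F : Type*) [Field F] (θ₁ θ₂ u : F) (h2 : θ₂ ≠ 0)
    (hu : u ≠ 0) (hrel : θ₁ = u ^ (q - 1) * θ₂) (hq2 : 2 ≤ q) :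
    {P : Projectivization F (F × F) | ∃ x : F, ∃ h : ((x * θ₁, x ^ q) : F × F) ≠ 0,
        x ≠ 0 ∧ P = Projectivization.mk F (x * θ₁, x ^ q) h} ⊆
      {P : Projectivization F (F × F) | ∃ x : F, ∃ h : ((x * θ₂, x ^ q) : F × F) ≠ 0,
        x ≠ 0 ∧ P = Projectivization.mk F (x * θ₂, x ^ q) h} := by
  rintro P ⟨x, h, hx, rfl⟩
  have hy : x * u⁻¹ ≠ 0 := mul_ne_zero hx (inv_ne_zero hu)
  have hne : ((x * u⁻¹ * θ₂, (x * u⁻¹) ^ q) : F × F) ≠ 0 := fun hc =>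
    pow_ne_zero q hy (congrArg Prod.snd hc)
  refine ⟨x * u⁻¹, hne, hy, ?_⟩
  rw [Projectivization.mk_eq_mk_iff']
  refine ⟨u ^ q, ?_⟩
  have hqsplit : u ^ q = u ^ (q - 1) * u := by
    rw [← pow_succ]; congr 1; omega
  simp only [Prod.smul_mk, smul_eq_mul, Prod.mk.injEq]
  constructor
  · rw [hrel, hqsplit]; field_simp
  · rw [mul_pow, inv_pow]; field_simp

lemma norm_eq_of_rel (q : ℕ) (F : Type*) [Field F] [Fintype F]
    (hF : Fintype.card F = q ^ 3) (hq2 : 2 ≤ q) (θ₂ u : F) (hu : u ≠ 0) :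
    (u ^ (q - 1) * θ₂) ^ (q ^ 2 + q + 1) = θ₂ ^ (q ^ 2 + q + 1) := by
  have hpow : u ^ (Fintype.card F - 1) = 1 := FiniteField.pow_card_sub_one_eq_one u hu
  rw [hF] at hpow
  have h1q : 1 ≤ q ^ 3 := Nat.one_le_pow _ _ (by omega)
  have hmul : (q - 1) * (q ^ 2 + q + 1) = q ^ 3 - 1 := by
    obtain ⟨m, rfl⟩ : ∃ m, q = m + 2 := ⟨q - 2, by omega⟩
    have e : m + 2 - 1 = m + 1 := by omega
    rw [e, eq_comm, Nat.sub_eq_iff_eq_add h1q]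
    ring
  rw [mul_pow, ← pow_mul, hmul, hpow, one_mul]

theorem sls_eq_iff_norm_eq (q : ℕ) (hq : IsPrimePow q) (F : Type*) [Field F] [Fintype F]
    (hF : Fintype.card F = q ^ 3) (θ₁ θ₂ : F) (h1 : θ₁ ≠ 0) (h2 : θ₂ ≠ 0) :
    {P : Projectivization F (F × F) | ∃ x : F, ∃ h : ((x * θ₁, x ^ q) : F × F) ≠ 0,
        x ≠ 0 ∧ P = Projectivization.mk F (x * θ₁, x ^ q) h} =
      {P : Projectivization F (F × F) | ∃ x : F, ∃ h : ((x * θ₂, x ^ q) : F × F) ≠ 0,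
        x ≠ 0 ∧ P = Projectivization.mk F (x * θ₂, x ^ q) h} ↔
      θ₁ ^ (q ^ 2 + q + 1) = θ₂ ^ (q ^ 2 + q + 1) := by
  classical
  have hq2 : 2 ≤ q := hq.two_le
  constructor
  · -- sets equal → norms equal
    intro hset
    have hne1 : ((1 * θ₁, (1:F) ^ q) : F × F) ≠ 0 := fun hc =>
      (one_ne_zero : (1:F) ≠ 0) (by simpa using congrArg Prod.snd hc)
    have hmem : Projectivization.mk F (1 * θ₁, (1:F) ^ q) hne1 ∈
        {P : Projectivization F (F × F) | ∃ x : F, ∃ h : ((x * θ₁, x ^ q) : F × F) ≠ 0,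
          x ≠ 0 ∧ P = Projectivization.mk F (x * θ₁, x ^ q) h} :=
      ⟨1, hne1, one_ne_zero, rfl⟩
    rw [hset] at hmem
    obtain ⟨y, hne2, hy, heq⟩ := hmem
    rw [Projectivization.mk_eq_mk_iff'] at heq
    obtain ⟨a, ha⟩ := heq
    simp only [Prod.smul_mk, smul_eq_mul, Prod.mk.injEq, one_pow, one_mul] at ha
    obtain ⟨ha1, ha2⟩ := ha
    have hy : y ≠ 0 := hy
    have hyq : y ^ q ≠ 0 := pow_ne_zero _ hy
    have haval : a = (y ^ q)⁻¹ :=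
      eq_inv_of_mul_eq_one_left (by linear_combination ha2)
    have key : (y⁻¹) ^ (q - 1) = y * (y ^ q)⁻¹ := by
      have hsplit : y ^ q = y ^ (q - 1) * y := by rw [← pow_succ]; congr 1; omega
      rw [hsplit, mul_inv, inv_pow, mul_comm ((y ^ (q - 1))⁻¹) y⁻¹, ← mul_assoc,
        mul_inv_cancel₀ hy, one_mul]
    have hrel : θ₁ = (y⁻¹) ^ (q - 1) * θ₂ := by
      rw [key]
      rw [haval] at ha1
      linear_combination -ha1
    rw [hrel]
    exact norm_eq_of_rel q F hF hq2 θ₂ y⁻¹ (inv_ne_zero hy)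
  · -- norms equal → sets equal
    intro hnorm
    obtain ⟨u, hu, hrel⟩ : ∃ u : F, u ≠ 0 ∧ θ₁ = u ^ (q - 1) * θ₂ := by
      set a : Fˣ := Units.mk0 θ₁ h1 with ha
      set b : Fˣ := Units.mk0 θ₂ h2 with hb
      obtain ⟨g, hg⟩ := IsCyclic.exists_generator (α := Fˣ)
      obtain ⟨k, hk⟩ := Subgroup.mem_zpowers_iff.mp (hg (a * b⁻¹))
      have horder : orderOf g = q ^ 3 - 1 := by
        rw [orderOf_eq_card_of_forall_mem_zpowers hg, Nat.card_eq_fintype_card, Fintype.card_units, hF]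
      have hc : (a * b⁻¹) ^ (q ^ 2 + q + 1) = 1 := Units.ext (by
        push_cast [ha, hb]
        field_simp
        rw [Units.val_mk0, Units.val_mk0, div_pow, hnorm, div_self (pow_ne_zero _ h2)])
      have h1q : 1 ≤ q ^ 3 := Nat.one_le_pow _ _ (by omega)
      have hzpow : g ^ (k * ((q : ℤ) ^ 2 + q + 1)) = 1 := by
        have hcast : ((q : ℤ) ^ 2 + q + 1) = ((q ^ 2 + q + 1 : ℕ) : ℤ) := by push_cast; ring
        rw [zpow_mul, hk, hcast, zpow_natCast, hc]
      have hdvd : ((q : ℤ) ^ 3 - 1) ∣ k * ((q : ℤ) ^ 2 + q + 1) := by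
        have hd := orderOf_dvd_iff_zpow_eq_one.mpr hzpow
        rw [horder] at hd
        rwa [show ((q ^ 3 - 1 : ℕ) : ℤ) = (q : ℤ) ^ 3 - 1 by
          rw [Nat.cast_sub h1q]; push_cast; ring] at hd
      rw [show ((q : ℤ) ^ 3 - 1) = ((q : ℤ) - 1) * ((q : ℤ) ^ 2 + q + 1) by ring] at hdvd
      have hqq : ((q : ℤ) ^ 2 + q + 1) ≠ 0 := by positivity
      obtain ⟨m, hm⟩ := (mul_dvd_mul_iff_right hqq).mp hdvd
      have hcalc : (g ^ m) ^ (q - 1 : ℕ) = a * b⁻¹ := by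
        have hme : m * (((q - 1 : ℕ)) : ℤ) = k := by
          rw [hm, Nat.cast_sub (by omega : 1 ≤ q)]; push_cast; ring
        rw [← zpow_natCast, ← zpow_mul, hme, hk]
      refine ⟨((g ^ m : Fˣ) : F), Units.ne_zero _, ?_⟩
      have hv : ((g ^ m : Fˣ) : F) ^ (q - 1) = θ₁ * θ₂⁻¹ := by
        have := congrArg Units.val hcalc
        simpa [Units.val_pow_eq_pow_val, ha, hb] using this
      rw [hv]
      field_simp
    apply Set.Subset.antisymm
    · exact sls_sub q F θ₁ θ₂ u h2 hu hrel hq2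
    · have h1' : θ₂ = (u⁻¹) ^ (q - 1) * θ₁ := by
        rw [hrel, inv_pow]
        field_simp
      exact sls_sub q F θ₂ θ₁ u⁻¹ h1 (inv_ne_zero hu) h1' hq2
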